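/- arXiv:1806.08261 — 3 statements merged into one kernel-verified Lean document; each statement's English description precedes it below -/
import Mathlib

section
/- For a prime p ≥ 5 and integer m ≥ 1, the zero-divisor graph Γ(ℤ_{p^m}) is pancyclic if and only if m = 2. -/
open SimpleGraph

/-- The set of nonzero zero-divisors of a commutative ring. -/
def zdVertex (R : Type*) [CommRing R] : Set R :=
  {x | x ≠ 0 ∧ ∃ y, y ≠ 0 ∧ x * y = 0}

/-- The zero-divisor graph `Γ(R)` of a commutative ring: vertices are the nonzero
zero-divisors, and distinct vertices are adjacent iff their product is zero. -/
def zdGraph (R : Type*) [CommRing R] : SimpleGraph (zdVertex R) where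
  Adj x y := x ≠ y ∧ (x : R) * y = 0
  symm := ⟨fun x y ⟨h1, h2⟩ => ⟨h1.symm, by rwa [mul_comm]⟩⟩
  loopless := ⟨fun x ⟨h1, _⟩ => h1 rfl⟩

/-- The ring of Gaussian integers modulo `n`, i.e. `ℤ[i]/⟨n⟩`. -/
abbrev Zi (n : ℕ) : Type := GaussianInt ⧸ Ideal.span ({(n : GaussianInt)} : Set GaussianInt)

/-- `G` contains a cycle of length `n`. -/
def HasCycleLength {V : Type*} (G : SimpleGraph V) (n : ℕ) : Prop :=
  ∃ (a : V) (p : G.Walk a a), p.IsCycle ∧ p.length = n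

/-- A graph of order `≥ 3` is pancyclic if it contains cycles of every length
from `3` to its order. -/
def Pancyclic {V : Type*} (G : SimpleGraph V) : Prop :=
  3 ≤ Nat.card V ∧ ∀ k, 3 ≤ k → k ≤ Nat.card V → HasCycleLength G k

/-- A graph is bipancyclic if it contains cycles of every even length from `4`
to its order. -/
def Bipancyclic {V : Type*} (G : SimpleGraph V) : Prop :=
  4 ≤ Nat.card V ∧ ∀ k, Even k → 4 ≤ k → k ≤ Nat.card V → HasCycleLength G k

/-- A graph is Hamiltonian if it contains a cycle passing through every vertex. -/
def IsHamiltonianGraph {V : Type*} (G : SimpleGraph V) : Prop :=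
  ∃ (a : V) (p : G.Walk a a), p.IsCycle ∧ ∀ v, v ∈ p.support

section myHelpers

open Finset

lemma myExistsPath {V : Type*} (G : SimpleGraph V) :
    ∀ (l : List V) (a : V), List.Chain G.Adj a l → (a :: l).Nodup →
    ∃ (b : V) (q : G.Walk a b), q.IsPath ∧ q.support = a :: l
  | [], a, _, _ => ⟨a, .nil, by simp, by simp⟩
  | x :: t, a, hc, hn => by
    obtain ⟨hadj, hc'⟩ := List.chain_cons.mp hc
    obtain ⟨b, q, hq, hs⟩ := myExistsPath G t x hc' hn.of_cons
    refine ⟨b, Walk.cons hadj q, ?_, by simp [hs]⟩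
    refine hq.cons ?_
    rw [hs]
    exact (List.nodup_cons.mp hn).1

lemma myChainCount {α : Type*} {R : α → α → Prop} {P : α → Bool}
    (hR : ∀ x y, R x y → P x → P y → False) :
    ∀ l : List α, l.Chain' R → 2 * l.countP P ≤ l.length + 1
  | [], _ => by simp
  | [x], _ => by by_cases h : P x <;> simp [List.countP_cons, h]
  | x :: y :: t, hc => by
    have hc1 : List.Chain' R (y :: t) := hc.tail
    have hc2 : List.Chain' R t := hc1.tail
    have hxy : R x y := (List.isChain_cons_cons.mp hc).1
    have ih := myChainCount hR t hc2
    have ih2 := myChainCount hR (y :: t) hc1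
    by_cases hx : P x
    · have hy : P y = false := by
        rcases hP : P y with _ | _
        · rfl
        · exact absurd (hR x y hxy hx hP) (by simp)
      simp [List.countP_cons, hx, hy] at *
      omega
    · simp [List.countP_cons, hx] at *
      omega

lemma myCompleteCycle {V : Type*} [Fintype V] (G : SimpleGraph V)
    (hG : ∀ x y : V, x ≠ y → G.Adj x y) (k : ℕ) (h3 : 3 ≤ k) (hk : k ≤ Fintype.card V) :
    HasCycleLength G k := by
  classical
  obtain ⟨s, -, hs⟩ := Finset.exists_subset_card_eq (s := (Finset.univ : Finset V))
    (n := k) (by simpa using hk)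
  have hnd0 : s.toList.Nodup := s.nodup_toList
  have hlen0 : s.toList.length = k := by simp [hs]
  obtain ⟨v0, v1, rest, hl⟩ : ∃ v0 v1 rest, s.toList = v0 :: v1 :: rest := by
    rcases hll : s.toList with _ | ⟨v0, _ | ⟨v1, rest⟩⟩ <;>
      simp [hll] at hlen0 <;> first | omega | exact ⟨v0, v1, rest, rfl⟩
  rw [hl] at hnd0 hlen0
  have hrne : rest ≠ [] := by
    rcases rest with _ | _
    · simp at hlen0; omega
    · simp
  have hchain : List.Chain G.Adj v1 rest := by
    have hpw : List.Pairwise G.Adj (v1 :: rest) :=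
      (hnd0.of_cons).imp (fun h => hG _ _ h)
    exact hpw.isChain
  obtain ⟨b, q, hq, hsup⟩ := myExistsPath G rest v1 hchain hnd0.of_cons
  have hbrest : b ∈ rest := by
    have h1 : q.support.getLast? = some b := by
      rw [List.getLast?_eq_getLast_of_ne_nil (by simp), q.getLast_support]
    rw [hsup] at h1
    rcases rest with _ | ⟨r0, rtail⟩
    · exact absurd rfl hrne
    · rw [List.getLast?_cons_cons] at h1
      exact List.mem_of_getLast? h1
  have hv0nmem : v0 ∉ v1 :: rest := (List.nodup_cons.mp hnd0).1
  have hv1nmem : v1 ∉ rest := (List.nodup_cons.mp hnd0.of_cons).1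
  have hbv0 : b ≠ v0 := fun h => hv0nmem (h ▸ List.mem_cons_of_mem _ hbrest)
  have hbv1 : b ≠ v1 := fun h => hv1nmem (h ▸ hbrest)
  have hadjb : G.Adj b v0 := hG _ _ hbv0
  have hadj01 : G.Adj v0 v1 := hG _ _ (fun h => hv0nmem (h ▸ List.mem_cons_self))
  have hv0sup : v0 ∉ q.support := by rw [hsup]; exact hv0nmem
  have hq2 : (q.concat hadjb).IsPath := by
    rw [Walk.isPath_def, Walk.support_concat]
    rw [List.nodup_append]
    exact ⟨hq.support_nodup, List.nodup_singleton _,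
      by simp; exact fun a ha h => hv0sup (h ▸ ha)⟩
  refine ⟨v0, Walk.cons hadj01 (q.concat hadjb), ?_, ?_⟩
  · rw [Walk.cons_isCycle_iff]
    refine ⟨hq2, ?_⟩
    rw [Walk.edges_concat, List.concat_eq_append, List.mem_append]
    rintro (h | h)
    · exact hv0sup (q.fst_mem_support_of_mem_edges h)
    · simp only [List.mem_singleton, Sym2.eq, Sym2.rel_iff', Prod.mk.injEq,
        Prod.swap_prod_mk] at h
      rcases h with ⟨h1, h2⟩ | ⟨h1, h2⟩
      · exact hbv0 h1.symm
      · exact hbv1 h2.symm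
  · have hls : q.support.length = q.length + 1 := by
      rw [Walk.length_support]
    rw [hsup] at hls
    simp only [Walk.length_cons, Walk.length_concat]
    simp at hls hlen0
    omega

lemma myMulValZero {n : ℕ} [NeZero n] (x y : ZMod n) (h : x * y = 0) :
    n ∣ x.val * y.val := by
  have : ((x.val * y.val : ℕ) : ZMod n) = 0 := by
    push_cast [ZMod.natCast_zmod_val]
    exact h
  exact (ZMod.natCast_eq_zero_iff _ _).mp this

lemma myZdChar (p m : ℕ) (hp : p.Prime) (hm : 1 ≤ m) (x : ZMod (p ^ m)) :
    x ∈ zdVertex (ZMod (p ^ m)) ↔ x ≠ 0 ∧ p ∣ x.val := by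
  haveI : NeZero (p ^ m) := ⟨pow_ne_zero _ hp.ne_zero⟩
  constructor
  · rintro ⟨hx0, y, hy0, hxy⟩
    refine ⟨hx0, ?_⟩
    by_contra hpx
    have hdvd : p ^ m ∣ x.val * y.val := myMulValZero x y hxy
    have hcop : (p ^ m).Coprime x.val :=
      Nat.Coprime.pow_left _ ((hp.coprime_iff_not_dvd).mpr hpx)
    have hdy : p ^ m ∣ y.val := hcop.dvd_of_dvd_mul_left hdvd
    have : y.val ≠ 0 := fun h => hy0 ((ZMod.val_eq_zero y).mp h)
    exact absurd (Nat.le_of_dvd (Nat.pos_of_ne_zero this) hdy) (not_le.mpr y.val_lt)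
  · rintro ⟨hx0, c, hc⟩
    refine ⟨hx0, (p ^ (m - 1) : ℕ), ?_, ?_⟩
    · have hlt : p ^ (m - 1) < p ^ m := Nat.pow_lt_pow_right hp.one_lt (by omega)
      intro h
      rw [ZMod.natCast_eq_zero_iff] at h
      exact absurd (Nat.le_of_dvd (pow_pos hp.pos _) h) (not_le.mpr hlt)
    · have : ((x.val * p ^ (m - 1) : ℕ) : ZMod (p ^ m)) = 0 := by
        rw [ZMod.natCast_eq_zero_iff, hc]
        refine ⟨c, ?_⟩
        rw [mul_comm p c, mul_assoc, ← pow_succ']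
        rw [show m - 1 + 1 = m by omega]
        ring
      rw [Nat.cast_mul, ZMod.natCast_zmod_val] at this
      simpa using this

lemma myCardValFilter (n : ℕ) [NeZero n] (Q : ℕ → Prop) [DecidablePred Q] :
    (univ.filter (fun x : ZMod n => Q x.val)).card = ((Finset.range n).filter Q).card := by
  refine Finset.card_bij (fun x _ => x.val) ?_ ?_ ?_
  · intro x hx
    simp only [mem_filter, Finset.mem_range, mem_univ, true_and] at hx ⊢
    exact ⟨x.val_lt, hx⟩
  · intro x _ y _ h
    exact ZMod.val_injective n h
  · intro k hk
    simp only [mem_filter, Finset.mem_range] at hk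
    refine ⟨(k : ZMod n), ?_, ZMod.val_cast_of_lt hk.1⟩
    simp only [mem_filter, mem_univ, true_and, ZMod.val_cast_of_lt hk.1]
    exact hk.2

lemma myDivCount (a q : ℕ) (ha : 1 ≤ a) (hq : 1 ≤ q) :
    ((Finset.range (a * q)).filter (fun k => k ≠ 0 ∧ a ∣ k)).card = q - 1 := by
  have h1 : a * q = (a * q - 1) + 1 := by
    have : 1 ≤ a * q := Nat.one_le_iff_ne_zero.mpr (by positivity)
    omega
  rw [h1]
  rw [Nat.card_multiples' (a * q - 1) a]
  have h2 : a * (q - 1) = a * q - a := by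
    have := Nat.mul_pred a q
    simpa using this
  have hle : a ≤ a * q := Nat.le_mul_of_pos_right a (by omega)
  have h3 : a * q - 1 = (a - 1) + a * (q - 1) := by omega
  rw [h3, Nat.add_mul_div_left _ _ (by omega : 0 < a), Nat.div_eq_of_lt (by omega)]
  omega

lemma myZdCard (p m : ℕ) (hp : p.Prime) (hm : 1 ≤ m) :
    Nat.card (zdVertex (ZMod (p ^ m))) = p ^ (m - 1) - 1 := by
  classical
  haveI : NeZero (p ^ m) := ⟨pow_ne_zero _ hp.ne_zero⟩
  rw [Nat.card_eq_fintype_card, Fintype.card_subtype]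
  have h1 : (univ.filter (fun a : ZMod (p ^ m) => a ∈ zdVertex (ZMod (p ^ m))))
      = (univ.filter (fun x : ZMod (p ^ m) => (fun k => k ≠ 0 ∧ p ∣ k) x.val)) := by
    apply Finset.filter_congr
    intro x _
    rw [myZdChar p m hp hm x]
    simp only [Ne, ZMod.val_eq_zero]
  rw [h1, myCardValFilter (p ^ m) (fun k => k ≠ 0 ∧ p ∣ k)]
  have h2 : p ^ m = p * p ^ (m - 1) := by
    rw [← pow_succ']
    congr 1
    omega
  rw [h2, myDivCount p (p ^ (m - 1)) hp.one_le (Nat.one_le_pow _ _ hp.pos)]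

lemma myZdCardP (p m : ℕ) (hp : p.Prime) (hm3 : 3 ≤ m) :
    Nat.card {x : zdVertex (ZMod (p ^ m)) // ¬ p ^ 2 ∣ (x : ZMod (p ^ m)).val}
      = (p ^ (m - 1) - 1) - (p ^ (m - 2) - 1) := by
  classical
  haveI : NeZero (p ^ m) := ⟨pow_ne_zero _ hp.ne_zero⟩
  rw [Nat.card_congr (Equiv.subtypeSubtypeEquivSubtypeInter
    (· ∈ zdVertex (ZMod (p ^ m))) (fun a => ¬ p ^ 2 ∣ a.val))]
  rw [Nat.card_eq_fintype_card, Fintype.card_subtype]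
  have h1 : (univ.filter (fun a : ZMod (p ^ m) => a ∈ zdVertex (ZMod (p ^ m)) ∧ ¬ p ^ 2 ∣ a.val))
      = (univ.filter (fun x : ZMod (p ^ m) => (fun k => (k ≠ 0 ∧ p ∣ k) ∧ ¬ p ^ 2 ∣ k) x.val)) := by
    apply Finset.filter_congr
    intro x _
    rw [myZdChar p m hp (by omega) x]
    simp only [Ne, ZMod.val_eq_zero]
  rw [h1, myCardValFilter (p ^ m) (fun k => (k ≠ 0 ∧ p ∣ k) ∧ ¬ p ^ 2 ∣ k)]
  have hdd : ∀ k : ℕ, p ^ 2 ∣ k → p ∣ k := fun k h => dvd_trans (dvd_pow_self p two_ne_zero) h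
  have hsplit : ((Finset.range (p ^ m)).filter (fun k => (k ≠ 0 ∧ p ∣ k) ∧ ¬ p ^ 2 ∣ k))
      = ((Finset.range (p ^ m)).filter (fun k => k ≠ 0 ∧ p ∣ k))
        \ ((Finset.range (p ^ m)).filter (fun k => k ≠ 0 ∧ p ^ 2 ∣ k)) := by
    ext k
    simp only [mem_filter, mem_sdiff, Finset.mem_range]
    have := hdd k
    tauto
  have hsub : ((Finset.range (p ^ m)).filter (fun k => k ≠ 0 ∧ p ^ 2 ∣ k))
      ⊆ ((Finset.range (p ^ m)).filter (fun k => k ≠ 0 ∧ p ∣ k)) := by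
    exact Finset.monotone_filter_right _ (fun k _ h => ⟨h.1, hdd k h.2⟩)
  rw [hsplit, Finset.card_sdiff_of_subset hsub]
  have e1 : p ^ m = p * p ^ (m - 1) := by rw [← pow_succ']; congr 1; omega
  have e2 : p ^ m = p ^ 2 * p ^ (m - 2) := by rw [← pow_add]; congr 1; omega
  rw [show ((Finset.range (p ^ m)).filter (fun k => k ≠ 0 ∧ p ∣ k)).card = p ^ (m - 1) - 1 by
      rw [e1, myDivCount p (p ^ (m - 1)) hp.one_le (Nat.one_le_pow _ _ hp.pos)],
    show ((Finset.range (p ^ m)).filter (fun k => k ≠ 0 ∧ p ^ 2 ∣ k)).card = p ^ (m - 2) - 1 by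
      rw [e2, myDivCount (p ^ 2) (p ^ (m - 2)) (Nat.one_le_pow _ _ hp.pos)
        (Nat.one_le_pow _ _ hp.pos)]]

end myHelpers

theorem stmt11 (p m : ℕ) (hp : p.Prime) (hp5 : 5 ≤ p) (hm : 1 ≤ m) :
    Pancyclic (zdGraph (ZMod (p ^ m))) ↔ m = 2 := by
  classical
  haveI : NeZero (p ^ m) := ⟨pow_ne_zero _ hp.ne_zero⟩
  have hcard := myZdCard p m hp hm
  constructor
  · intro hpan
    by_contra hm2
    rcases Nat.lt_or_ge m 2 with h | h
    · -- m = 1 : no vertices at all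
      have hm1 : m = 1 := by omega
      subst hm1
      simp only [Nat.sub_self, pow_zero] at hcard
      have h3 := hpan.1
      omega
    · -- m ≥ 3 : no Hamiltonian cycle
      have hm3 : 3 ≤ m := by omega
      obtain ⟨a, c, hcyc, hclen⟩ := hpan.2 (Nat.card (zdVertex (ZMod (p ^ m)))) hpan.1 le_rfl
      set l := c.support.tail with hl
      have hchain : l.Chain' (zdGraph (ZMod (p ^ m))).Adj := (Walk.isChain_adj_support c).tail
      have hnd : l.Nodup := hcyc.support_nodup
      have hlen : l.length = Nat.card (zdVertex (ZMod (p ^ m))) := by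
        have h1 : c.support.length = c.length + 1 := c.length_support
        rw [hl, List.length_tail, h1]
        omega
      have huniv : l.toFinset = (Finset.univ : Finset (zdVertex (ZMod (p ^ m)))) := by
        apply Finset.eq_univ_of_card
        rw [List.toFinset_card_of_nodup hnd, hlen, Nat.card_eq_fintype_card]
      set P : zdVertex (ZMod (p ^ m)) → Bool :=
        fun x => decide (¬ p ^ 2 ∣ (x : ZMod (p ^ m)).val) with hP
      have hind : ∀ x y, (zdGraph (ZMod (p ^ m))).Adj x y → P x → P y → False := by
        intro x y hadj hPx hPy
        simp only [hP, decide_eq_true_eq] at hPx hPy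
        obtain ⟨hxne, hxy0⟩ := (hadj : x ≠ y ∧ (x : ZMod (p ^ m)) * y = 0)
        have hxv := (myZdChar p m hp hm _).mp x.2
        have hyv := (myZdChar p m hp hm _).mp y.2
        obtain ⟨a1, ha1⟩ := hxv.2
        obtain ⟨b1, hb1⟩ := hyv.2
        have hpa : ¬ p ∣ a1 := by
          rintro ⟨t, rfl⟩
          exact hPx ⟨t, by rw [ha1]; ring⟩
        have hpb : ¬ p ∣ b1 := by
          rintro ⟨t, rfl⟩
          exact hPy ⟨t, by rw [hb1]; ring⟩
        have hdvd : p ^ m ∣ (x : ZMod (p ^ m)).val * (y : ZMod (p ^ m)).val :=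
          myMulValZero _ _ hxy0
        rw [ha1, hb1] at hdvd
        have h2 : p ^ (m - 2) ∣ a1 * b1 := by
          have hne2 : (p : ℕ) ^ 2 ≠ 0 := pow_ne_zero _ hp.ne_zero
          have hh : p ^ 2 * p ^ (m - 2) ∣ p ^ 2 * (a1 * b1) := by
            calc p ^ 2 * p ^ (m - 2) = p ^ m := by rw [← pow_add]; congr 1; omega
            _ ∣ p * a1 * (p * b1) := hdvd
            _ = p ^ 2 * (a1 * b1) := by ring
          exact (mul_dvd_mul_iff_left hne2).mp hh
        have hpd : p ∣ a1 * b1 :=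
          dvd_trans (dvd_pow_self p (by omega : m - 2 ≠ 0)) h2
        rcases (Nat.Prime.dvd_mul hp).mp hpd with h | h
        exacts [hpa h, hpb h]
      have hcount := myChainCount hind l hchain
      have hc2 : l.countP P
          = Nat.card {x : zdVertex (ZMod (p ^ m)) // ¬ p ^ 2 ∣ (x : ZMod (p ^ m)).val} := by
        rw [List.countP_eq_length_filter,
          ← List.toFinset_card_of_nodup (hnd.filter P), List.toFinset_filter, huniv,
          Nat.card_eq_fintype_card, Fintype.card_subtype]
        congr 1
        apply Finset.filter_congr
        intro x _
        simp [hP]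
      rw [hc2, myZdCardP p m hp hm3, hlen, hcard] at hcount
      have hq : 1 ≤ p ^ (m - 2) := Nat.one_le_pow _ _ hp.pos
      have e1 : p ^ (m - 1) = p * p ^ (m - 2) := by rw [← pow_succ']; congr 1; omega
      have e5 : 5 * p ^ (m - 2) ≤ p * p ^ (m - 2) := Nat.mul_le_mul_right _ hp5
      rw [e1] at hcount
      omega
  · rintro rfl
    have hcard2 : Nat.card (zdVertex (ZMod (p ^ 2))) = p - 1 := by
      rw [hcard]
      norm_num
    have hcomp : ∀ x y : zdVertex (ZMod (p ^ 2)), x ≠ y → (zdGraph (ZMod (p ^ 2))).Adj x y := by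
      intro x y hne
      refine (⟨hne, ?_⟩ : x ≠ y ∧ (x : ZMod (p ^ 2)) * y = 0)
      have hxv := (myZdChar p 2 hp (by omega) _).mp x.2
      have hyv := (myZdChar p 2 hp (by omega) _).mp y.2
      have hz : (((x : ZMod (p ^ 2)).val * (y : ZMod (p ^ 2)).val : ℕ) : ZMod (p ^ 2)) = 0 := by
        rw [ZMod.natCast_eq_zero_iff]
        have := mul_dvd_mul hxv.2 hyv.2
        simpa [sq] using this
      rwa [Nat.cast_mul, ZMod.natCast_zmod_val, ZMod.natCast_zmod_val] at hz
    refine ⟨by rw [hcard2]; omega, ?_⟩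
    intro k h3 hk
    exact myCompleteCycle (zdGraph (ZMod (p ^ 2))) hcomp k h3
      (by rw [← Nat.card_eq_fintype_card]; exact hk)
end

section
/- For distinct primes p < q, the zero-divisor graph Γ(ℤ_{p²q²}) is not Hamiltonian. -/
open SimpleGraph

private lemma zd_mul_eq_zero_iff (n : ℕ) [NeZero n] (x : ZMod n) (c : ℕ) :
    x * (c : ZMod n) = 0 ↔ n ∣ x.val * c := by
  conv_lhs => rw [← ZMod.natCast_rightInverse (n := n) x, ← Nat.cast_mul]
  rw [ZMod.natCast_eq_zero_iff]

private lemma zd_mul_eq_zero_iff' (n : ℕ) [NeZero n] (x y : ZMod n) :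
    x * y = 0 ↔ n ∣ x.val * y.val := by
  conv_lhs => rw [← ZMod.natCast_rightInverse (n := n) x,
    ← ZMod.natCast_rightInverse (n := n) y, ← Nat.cast_mul]
  rw [ZMod.natCast_eq_zero_iff]

private lemma supp_getElem {V : Type*} {G : SimpleGraph V} {u v : V} (w : G.Walk u v) :
    ∀ (i : ℕ) (h : i < w.support.length), w.support[i] = w.getVert i := by
  induction w with
  | nil => intro i h; simp at h; subst h; rfl
  | cons hadj p ih =>
    intro i h
    cases i with
    | zero => rfl
    | succ j =>
      simp only [Walk.support_cons, List.getElem_cons_succ, Walk.getVert_cons_succ]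
      exact ih j (by simpa using h)

private lemma nt {p q a b : ℕ} (hp : p.Prime) (hq : q.Prime) (hne : p ≠ q)
    (h1 : p^2*q^2 ∣ a*(p*q^2)) (h2 : ¬ p^2*q^2 ∣ a*q^2) (h3 : ¬ p^2*q^2 ∣ a*(p^2*q))
    (hab : p^2*q^2 ∣ a*b) : p^2*q^2 ∣ b*(p*q) := by
  have hp0 := hp.pos
  have hq0 := hq.pos
  have hpa : p ∣ a :=
    (Nat.mul_dvd_mul_iff_right (show 0 < p*q^2 by positivity)).mp
      (show p*(p*q^2) ∣ a*(p*q^2) by rw [show p*(p*q^2) = p^2*q^2 by ring]; exact h1)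
  obtain ⟨m, rfl⟩ := hpa
  have hpm : ¬ p ∣ m := by rintro ⟨m', rfl⟩; exact h2 ⟨m', by ring⟩
  have hqm : ¬ q ∣ m := by rintro ⟨m', rfl⟩; exact h3 ⟨p*m', by ring⟩
  have hmb : p*q^2 ∣ m*b :=
    (Nat.mul_dvd_mul_iff_left hp0).mp
      (show p*(p*q^2) ∣ p*(m*b) by
        rw [show p*(p*q^2) = p^2*q^2 by ring, show p*(m*b) = p*m*b by ring]; exact hab)
  have hpb : p ∣ b := ((hp.dvd_mul).mp (dvd_trans (Dvd.intro _ rfl) hmb)).resolve_left hpm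
  have hq2b : q^2 ∣ b :=
    ((hq.coprime_iff_not_dvd.mpr hqm).pow_left 2).dvd_of_dvd_mul_left
      (dvd_trans (Dvd.intro_left p rfl) hmb)
  have hcop : Nat.Coprime p (q^2) := ((Nat.coprime_primes hp hq).mpr hne).pow_right 2
  obtain ⟨c, rfl⟩ := hcop.mul_dvd_of_dvd_of_dvd hpb hq2b
  exact ⟨q*c, by ring⟩

theorem stmt12 (p q : ℕ) (hp : p.Prime) (hq : q.Prime) (hpq : p < q) :
    ¬ IsHamiltonianGraph (zdGraph (ZMod (p ^ 2 * q ^ 2))) := by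
  rintro ⟨v0, w, hcyc, hsupp⟩
  classical
  have hp2 := hp.two_le
  have hq2 := hq.two_le
  have hne : p ≠ q := hpq.ne
  set n := p^2*q^2 with hn
  have hn1 : 1 < n := by
    rw [hn]
    calc 1 < 2^2*2^2 := by norm_num
      _ ≤ p^2*q^2 := Nat.mul_le_mul (Nat.pow_le_pow_left hp2 2) (Nat.pow_le_pow_left hq2 2)
  haveI : NeZero n := ⟨by omega⟩
  set R := ZMod n with hR
  -- the predicates
  let PT : R → Prop := fun x => x * ((p*q^2 : ℕ) : R) = 0 ∧
    x * ((q^2 : ℕ) : R) ≠ 0 ∧ x * ((p^2*q : ℕ) : R) ≠ 0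
  let PS : R → Prop := fun x => x * ((p*q : ℕ) : R) = 0
  let Tset : Set (zdVertex R) := {x | PT x.1}
  let Sset : Set (zdVertex R) := {x | PS x.1}
  -- neighbors of T lie in S
  have key : ∀ x y : zdVertex R, PT x.1 → (x.1 : R) * y.1 = 0 → PS y.1 := by
    intro x y hx hxy
    obtain ⟨h1, h2, h3⟩ := hx
    rw [zd_mul_eq_zero_iff] at h1
    rw [zd_mul_eq_zero_iff'] at hxy
    have h2' : ¬ (n ∣ (x.1 : R).val * q^2) := fun hd => h2 ((zd_mul_eq_zero_iff n _ _).mpr hd)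
    have h3' : ¬ (n ∣ (x.1 : R).val * (p^2*q)) := fun hd => h3 ((zd_mul_eq_zero_iff n _ _).mpr hd)
    show (y.1 : R) * ((p*q : ℕ) : R) = 0
    exact (zd_mul_eq_zero_iff n _ _).mpr (nt hp hq hne h1 h2' h3' hxy)
  -- the cycle enumeration
  set N := w.length with hNdef
  have hN3 : 3 ≤ N := hcyc.three_le_length
  haveI : NeZero N := ⟨by omega⟩
  let F : Fin N → (zdVertex R) := fun i => w.getVert (i.val+1)
  have hlen : w.support.length = N + 1 := by rw [Walk.length_support]
  have Finj : Function.Injective F := by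
    intro i j hij
    have hnd := hcyc.support_nodup
    have hti : ∀ k : Fin N,
        w.support.tail[k.val]'(by simp [hlen, k.2]) = F k := by
      intro k
      rw [List.getElem_tail, supp_getElem]
    have := List.Nodup.getElem_inj_iff hnd (i := i.val) (j := j.val)
      (hi := by simp [hlen, i.2]) (hj := by simp [hlen, j.2])
    rw [hti i, hti j] at this
    exact Fin.ext (this.mp hij)
  have h00 : w.getVert N = w.getVert 0 := by
    rw [hNdef, Walk.getVert_length, Walk.getVert_zero]
  have Fsurj : Function.Surjective F := by
    intro v
    obtain ⟨k, hk, hkle⟩ := Walk.mem_support_iff_exists_getVert.mp (hsupp v)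
    rcases Nat.eq_zero_or_pos k with rfl | hk1
    · refine ⟨⟨N-1, by omega⟩, ?_⟩
      show w.getVert (N-1+1) = v
      rw [show N-1+1 = N by omega, h00]
      rw [Walk.getVert_zero] at hk ⊢
      exact hk
    · exact ⟨⟨k-1, by omega⟩, by show w.getVert (k-1+1) = v; rw [show k-1+1 = k by omega]; exact hk⟩
  have hadj : ∀ i : Fin N, (zdGraph R).Adj (F i) (F (i+1)) := by
    intro i
    have hiv : ((i+1 : Fin N)).val = (i.val + 1) % N := by
      rw [Fin.add_def]
      simp [Fin.val_one']
    rcases lt_or_eq_of_le (Nat.succ_le_of_lt i.2) with h | h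
    · have hv : ((i+1 : Fin N)).val = i.val+1 := by rw [hiv, Nat.mod_eq_of_lt h]
      show (zdGraph R).Adj (w.getVert (i.val+1)) (w.getVert (((i+1 : Fin N)).val+1))
      rw [hv]
      exact w.adj_getVert_succ (by omega)
    · have hv : ((i+1 : Fin N)).val = 0 := by
        rw [hiv, show (i:ℕ)+1 = N from h, Nat.mod_self]
      show (zdGraph R).Adj (w.getVert (i.val+1)) (w.getVert (((i+1 : Fin N)).val+1))
      rw [hv, show (i:ℕ)+1 = N from h, h00]
      exact w.adj_getVert_succ (by omega)
  let E : Fin N ≃ zdVertex R := Equiv.ofBijective F ⟨Finj, Fsurj⟩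
  -- injection Tset → Sset
  have hTS : Nat.card Tset ≤ Nat.card Sset := by
    refine Nat.card_le_card_of_injective
      (fun t => (⟨F (E.symm t.1 + 1), ?_⟩ : Sset)) ?_
    · have ha := hadj (E.symm t.1)
      have hE : F (E.symm t.1) = t.1 := E.apply_symm_apply t.1
      rw [hE] at ha
      exact key t.1 _ t.2 (show t.1 ≠ F (E.symm t.1 + 1) ∧ (t.1.1 : R) * (F (E.symm t.1 + 1)).1 = 0 from ha).2
    · intro t1 t2 h
      have h' : F (E.symm t1.1 + 1) = F (E.symm t2.1 + 1) := congrArg Subtype.val h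
      have := add_left_injective (1 : Fin N) (Finj h')
      have := E.symm.injective this
      exact Subtype.ext this
  -- |S| ≤ pq - 1
  have hSdvd : ∀ s : Sset, (p*q) ∣ (s.1.1 : R).val := by
    intro s
    have := s.2
    simp only [Sset, Set.mem_setOf_eq, PS] at this
    rw [zd_mul_eq_zero_iff] at this
    exact (Nat.mul_dvd_mul_iff_right (show 0 < p*q by positivity)).mp
      (by rw [show (p*q)*(p*q) = p^2*q^2 by ring]; exact this)
  have hSvalpos : ∀ s : Sset, 0 < (s.1.1 : R).val := by
    intro s
    rcases Nat.eq_zero_or_pos (s.1.1 : R).val with h0 | h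
    · exact absurd ((ZMod.val_eq_zero _).mp h0) s.1.2.1
    · exact h
  have hS : Nat.card Sset ≤ p*q - 1 := by
    have hc : Nat.card (Set.Ioo 0 (p*q)) = p*q - 1 := by simp
    rw [← hc]
    refine Nat.card_le_card_of_injective
      (fun s => (⟨(s.1.1 : R).val / (p*q), ?_, ?_⟩ : Set.Ioo 0 (p*q))) ?_
    · exact Nat.div_pos (Nat.le_of_dvd (hSvalpos s) (hSdvd s)) (by positivity)
    · rw [Nat.div_lt_iff_lt_mul (by positivity)]
      calc (s.1.1 : R).val < n := ZMod.val_lt _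
        _ = (p*q)*(p*q) := by rw [hn]; ring
    · intro s1 s2 h
      have h' : (s1.1.1 : R).val / (p*q) = (s2.1.1 : R).val / (p*q) :=
        congrArg Subtype.val h
      have hval : (s1.1.1 : R).val = (s2.1.1 : R).val := by
        rw [← Nat.div_mul_cancel (hSdvd s1), ← Nat.div_mul_cancel (hSdvd s2), h']
      have : (s1.1.1 : R) = s2.1.1 := by
        rw [← ZMod.natCast_rightInverse (n := n) (s1.1.1 : R),
          ← ZMod.natCast_rightInverse (n := n) (s2.1.1 : R), hval]
      exact Subtype.ext (Subtype.ext this)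
  -- |T| ≥ (p-1)(q-1)q
  let I : Finset ℕ := (Finset.range (p*q)).filter (Nat.Coprime (p*q))
  have hIcard : I.card = (p-1)*(q-1) := by
    have : I.card = Nat.totient (p*q) := rfl
    rw [this, Nat.totient_mul ((Nat.coprime_primes hp hq).mpr hne),
      Nat.totient_prime hp, Nat.totient_prime hq]
  have hT : (p-1)*(q-1)*q ≤ Nat.card Tset := by
    have hGdef : ∀ (ij : {x // x ∈ I} × Fin q),
        p*(ij.1.1 + ij.2.1*(p*q)) < n ∧ 0 < ij.1.1 ∧
        ¬ p ∣ ij.1.1 ∧ ¬ q ∣ ij.1.1 := by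
      rintro ⟨⟨i, hi⟩, ⟨j, hj⟩⟩
      simp only [I, Finset.mem_filter, Finset.mem_range] at hi
      obtain ⟨hilt, hicop⟩ := hi
      have hip : ¬ p ∣ i :=
        (hp.coprime_iff_not_dvd).mp (Nat.Coprime.coprime_dvd_left (dvd_mul_right p q) hicop)
      have hiq : ¬ q ∣ i :=
        (hq.coprime_iff_not_dvd).mp (Nat.Coprime.coprime_dvd_left (dvd_mul_left q p) hicop)
      have hipos : 0 < i := by
        rcases Nat.eq_zero_or_pos i with rfl | h
        · exact absurd (dvd_zero p) hip
        · exact h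
      refine ⟨?_, hipos, hip, hiq⟩
      have : i + j*(p*q) < p*q^2 := by
        calc i + j*(p*q) < p*q + (q-1)*(p*q) := by
              have : j ≤ q - 1 := by omega
              have : j*(p*q) ≤ (q-1)*(p*q) := Nat.mul_le_mul_right _ this
              omega
          _ = q*(p*q) := by
              have : p*q + (q-1)*(p*q) = (1 + (q-1))*(p*q) := by ring
              rw [this, show 1 + (q-1) = q by omega]
          _ = p*q^2 := by ring
      calc p*(i + j*(p*q)) < p*(p*q^2) := by
            exact mul_lt_mul_of_pos_left this (by omega)
        _ = n := by rw [hn]; ring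
    -- the map into Tset
    have hmem : ∀ (ij : {x // x ∈ I} × Fin q),
        (((p*(ij.1.1 + ij.2.1*(p*q)) : ℕ) : R) ∈ zdVertex R) ∧
        PT ((p*(ij.1.1 + ij.2.1*(p*q)) : ℕ) : R) := by
      intro ij
      obtain ⟨hlt, hipos, hip, hiq⟩ := hGdef ij
      set m := p*(ij.1.1 + ij.2.1*(p*q)) with hm
      have hval : ((m : ℕ) : R).val = m := ZMod.val_natCast_of_lt hlt
      have hPT : PT ((m : ℕ) : R) := by
        refine ⟨?_, ?_, ?_⟩
        · refine (zd_mul_eq_zero_iff n _ _).mpr ?_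
          rw [hval]
          exact ⟨ij.1.1 + ij.2.1*(p*q), by rw [hm]; ring⟩
        · intro h0
          have hdvd : n ∣ m * q^2 := by
            have := (zd_mul_eq_zero_iff n ((m : ℕ) : R) (q^2)).mp h0
            rwa [hval] at this
          have : p ∣ ij.1.1 + ij.2.1*(p*q) := by
            have h1 : (p*p)*(q^2) ∣ ((ij.1.1 + ij.2.1*(p*q))*p)*(q^2) := by
              rw [show ((ij.1.1 + ij.2.1*(p*q))*p)*(q^2) = m*q^2 by rw [hm]; ring,
                show (p*p)*(q^2) = p^2*q^2 by ring]
              exact hdvd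
            have h2 : p*p ∣ (ij.1.1 + ij.2.1*(p*q))*p :=
              (Nat.mul_dvd_mul_iff_right (show 0 < q^2 by positivity)).mp h1
            exact (Nat.mul_dvd_mul_iff_right hp.pos).mp
              (by rw [show (ij.1.1 + ij.2.1*(p*q))*p = (ij.1.1 + ij.2.1*(p*q))*p from rfl]; exact h2)
          have : p ∣ ij.1.1 := by
            have hd : p ∣ ij.2.1*(p*q) := ⟨ij.2.1*q, by ring⟩
            have h'' := Nat.dvd_sub this hd
            rwa [Nat.add_sub_cancel] at h''
          exact hip this
        · intro h0
          have hdvd : n ∣ m * (p^2*q) := by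
            have := (zd_mul_eq_zero_iff n ((m : ℕ) : R) (p^2*q)).mp h0
            rwa [hval] at this
          have hq' : q ∣ p*(ij.1.1 + ij.2.1*(p*q)) := by
            have h1 : (p^2*q)*q ∣ (p*(ij.1.1 + ij.2.1*(p*q)))*(p^2*q) := by
              rw [show (p^2*q)*q = p^2*q^2 by ring]
              rw [hm] at hdvd
              exact hdvd
            have h2 : (q)*(p^2*q) ∣ (p*(ij.1.1 + ij.2.1*(p*q)))*(p^2*q) := by
              rw [show (q)*(p^2*q) = (p^2*q)*q by ring]
              exact h1
            exact (Nat.mul_dvd_mul_iff_right (show 0 < p^2*q by positivity)).mp h2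
          have : q ∣ ij.1.1 + ij.2.1*(p*q) :=
            (hq.dvd_mul.mp hq').resolve_left
              (fun h => hne ((Nat.prime_dvd_prime_iff_eq hq hp).mp h).symm)
          have : q ∣ ij.1.1 := by
            have hd : q ∣ ij.2.1*(p*q) := ⟨ij.2.1*p, by ring⟩
            have h'' := Nat.dvd_sub this hd
            rwa [Nat.add_sub_cancel] at h''
          exact hiq this
      refine ⟨⟨?_, ((p*q^2 : ℕ) : R), ?_, ?_⟩, hPT⟩
      · intro h0
        rw [h0] at hval
        simp only [ZMod.val_zero] at hval
        have hm0 : 0 < m := Nat.mul_pos (by omega) (by omega)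
        omega
      · rw [Ne, ZMod.natCast_eq_zero_iff]
        intro hd
        have hle := Nat.le_of_dvd (show 0 < p*q^2 by positivity) hd
        rw [hn] at hle
        have hgt : p*q^2 < p^2*q^2 := by
          calc p*q^2 = 1*(p*q^2) := by ring
            _ < p*(p*q^2) := by
                exact mul_lt_mul_of_pos_right (by omega) (by positivity)
            _ = p^2*q^2 := by ring
        omega
      · exact hPT.1
    refine le_trans ?_ (Nat.card_le_card_of_injective
      (fun ij => (⟨⟨((p*(ij.1.1 + ij.2.1*(p*q)) : ℕ) : R), (hmem ij).1⟩, by exact (hmem ij).2⟩ : Tset)) ?_)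
    · rw [Nat.card_prod, Nat.card_eq_finsetCard, Nat.card_eq_fintype_card,
        Fintype.card_fin, hIcard]
    · rintro ⟨⟨i1, hi1⟩, ⟨j1, hj1⟩⟩ ⟨⟨i2, hi2⟩, ⟨j2, hj2⟩⟩ h
      have h' : ((p*(i1 + j1*(p*q)) : ℕ) : R) = ((p*(i2 + j2*(p*q)) : ℕ) : R) := by
        have := congrArg (fun t => (t.1.1 : R)) h
        exact this
      have hlt1 := (hGdef ⟨⟨i1, hi1⟩, ⟨j1, hj1⟩⟩).1
      have hlt2 := (hGdef ⟨⟨i2, hi2⟩, ⟨j2, hj2⟩⟩).1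
      have hvv : p*(i1 + j1*(p*q)) = p*(i2 + j2*(p*q)) := by
        have := congrArg ZMod.val h'
        rwa [ZMod.val_natCast_of_lt hlt1, ZMod.val_natCast_of_lt hlt2] at this
      have hsum : i1 + j1*(p*q) = i2 + j2*(p*q) := Nat.eq_of_mul_eq_mul_left hp.pos hvv
      have hi1lt : i1 < p*q := by
        simp only [I, Finset.mem_filter, Finset.mem_range] at hi1; exact hi1.1
      have hi2lt : i2 < p*q := by
        simp only [I, Finset.mem_filter, Finset.mem_range] at hi2; exact hi2.1
      have hieq : i1 = i2 := by
        have := congrArg (· % (p*q)) hsum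
        simpa [Nat.add_mul_mod_self_right, Nat.mod_eq_of_lt hi1lt, Nat.mod_eq_of_lt hi2lt]
          using this
      have hjeq : j1 = j2 := by
        rw [hieq] at hsum
        have := Nat.add_left_cancel hsum
        exact Nat.eq_of_mul_eq_mul_right (show 0 < p*q by positivity) this
      simp [hieq, hjeq]
  -- final contradiction
  have hfinal : (p-1)*(q-1)*q ≤ p*q - 1 := le_trans hT (le_trans hTS hS)
  obtain ⟨a', rfl⟩ : ∃ a', p = a' + 2 := ⟨p - 2, by omega⟩
  obtain ⟨b', rfl⟩ : ∃ b', q = b' + a' + 3 := ⟨q - a' - 3, by omega⟩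
  have h1 : (a'+2) ≤ (a'+1)*(b'+a'+2) := by
    have := Nat.mul_le_mul (show 1 ≤ a'+1 by omega) (show a'+2 ≤ b'+a'+2 by omega)
    omega
  have hA : (a'+2)*(b'+a'+3) ≤ (a'+1)*(b'+a'+2)*(b'+a'+3) :=
    Nat.mul_le_mul_right _ h1
  rw [show a'+2-1 = a'+1 by omega, show (b'+a'+3)-1 = b'+a'+2 by omega] at hfinal
  set A := (a'+1)*(b'+a'+2)*(b'+a'+3) with hAdef
  set B := (a'+2)*(b'+a'+3) with hBdef
  have hB1 : 0 < B := Nat.mul_pos (by omega) (by omega)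
  omega
end

section
/- For every integer m ≥ 2, the line graph L(Γ(ℤ_{2^m}[i])) of the zero-divisor graph of the Gaussian integers modulo 2^m is pancyclic. -/
open SimpleGraph

namespace Aux
variable {V : Type*} {G : SimpleGraph V}

variable {V : Type*} {G : SimpleGraph V}

/-- From a chain, build a walk whose support is the chain's list. -/
lemma walk_of_chain : ∀ (a : V) (l : List V), List.Chain G.Adj a l →
    ∃ (b : V) (p : G.Walk a b), p.support = a :: l := by
  intro a l
  induction l generalizing a with
  | nil => intro _; exact ⟨a, Walk.nil, rfl⟩
  | cons c l ih =>
    intro h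
    rcases List.chain_cons.mp h with ⟨hac, hc⟩
    obtain ⟨b, p, hp⟩ := ih c hc
    exact ⟨b, Walk.cons hac p, by simp [hp]⟩

lemma closing_edge_not_mem {a b : V} (p : G.Walk a b) (hp : p.IsPath) (hl : 2 ≤ p.length) :
    s(b, a) ∉ p.edges := by
  induction p with
  | nil => simp
  | @cons u c v h q ih =>
    have hq : q.IsPath := (Walk.cons_isPath_iff h q).mp hp |>.1
    have hu : u ∉ q.support := ((Walk.cons_isPath_iff h q).mp hp).2
    simp only [Walk.edges_cons, List.mem_cons]
    rintro (heq | hmem)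
    · rw [Sym2.eq_iff] at heq
      rcases heq with ⟨h1, h2⟩ | ⟨h1, h2⟩
      · subst h1; exact hu (q.end_mem_support)
      · subst h1
        have : q = Walk.nil := Walk.isPath_iff_eq_nil.mp hq
        subst this
        simp at hl
    · exact hu (Walk.snd_mem_support_of_mem_edges q hmem)

/-- Build a cycle in `G` from a list of distinct vertices forming a closed chain. -/
lemma hasCycleLength_of_list (l : List V) (h3 : 3 ≤ l.length) (hnd : l.Nodup)
    (hch : l.Chain' G.Adj)
    (hcl : ∀ h : l ≠ [], G.Adj (l.getLast h) (l.head h)) :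
    ∃ (a : V) (p : G.Walk a a), p.IsCycle ∧ p.length = l.length := by
  obtain ⟨a, l', rfl⟩ : ∃ a l', l = a :: l' := by
    cases l with
    | nil => simp at h3
    | cons a l' => exact ⟨a, l', rfl⟩
  simp only [List.length_cons] at h3
  have hch' : List.Chain G.Adj a l' := hch
  obtain ⟨b, p, hsupp⟩ := walk_of_chain a l' hch'
  have hne : (a :: l') ≠ [] := by simp
  have hb : b = (a :: l').getLast hne := by
    rw [← List.getLast_congr _ hne hsupp]
    exact p.getLast_support.symm
  have hlen : p.length = l'.length := by
    have := congrArg List.length hsupp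
    simpa [Walk.length_support] using this
  have hadj : G.Adj b a := by
    have := hcl hne
    rwa [← hb] at this
  refine ⟨b, Walk.cons hadj p, ?_, by simp [hlen]⟩
  rw [Walk.cons_isCycle_iff]
  constructor
  · exact Walk.IsPath.mk' (by rw [hsupp]; exact hnd)
  · apply closing_edge_not_mem p (Walk.IsPath.mk' (by rw [hsupp]; exact hnd))
    rw [hlen]; omega



lemma shares (x : V) {e f : G.edgeSet} (he : x ∈ (e : Sym2 V)) (hf : x ∈ (f : Sym2 V))
    (hne : e ≠ f) : (lineGraph G).Adj e f :=
  lineGraph_adj_iff_exists.mpr ⟨hne, x, he, hf⟩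

lemma chain'_of_common (l : List G.edgeSet) (hl : l.Nodup) (x : V)
    (hx : ∀ e ∈ l, x ∈ (e : Sym2 V)) : l.Chain' (lineGraph G).Adj :=
  (hl.imp_of_mem (fun ha hb hne => shares x (hx _ ha) (hx _ hb) hne)).isChain

lemma getLast_ne_head {α : Type*} (l : List α) (hl : l.Nodup) (h2 : 2 ≤ l.length)
    (hne : l ≠ []) : l.getLast hne ≠ l.head hne := by
  cases l with
  | nil => simp at hne
  | cons a l' =>
    cases l' with
    | nil => simp at h2
    | cons b l'' =>
      have h1 : (b :: l'') ≠ [] := by simp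
      rw [List.getLast_cons h1]
      simp only [List.head_cons]
      intro h
      rw [List.nodup_cons] at hl
      exact hl.1 (h ▸ List.getLast_mem h1)

lemma sym2_eq_of_subset {e f : Sym2 V} (hf : ¬ f.IsDiag) (h : ∀ x ∈ f, x ∈ e) : f = e := by
  induction e using Sym2.ind with
  | _ a b =>
  induction f using Sym2.ind with
  | _ c d =>
  simp only [Sym2.mk_isDiag_iff] at hf
  have hc := h c (by simp)
  have hd := h d (by simp)
  simp only [Sym2.mem_iff] at hc hd
  rw [Sym2.eq_iff]
  rcases hc with rfl | rfl <;> rcases hd with rfl | rfl <;> tauto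

lemma chain_mem {α : Type*} {R : α → α → Prop} :
    ∀ (a : α) (l : List α), List.Chain R a l →
      List.Chain (fun x y => R x y ∧ x ∈ a :: l ∧ y ∈ l) a l := by
  intro a l
  induction l generalizing a with
  | nil => intro _; exact List.Chain.nil
  | cons b l' ih =>
    intro h
    rcases List.chain_cons.mp h with ⟨hab, hb⟩
    refine List.chain_cons.mpr ⟨⟨hab, by simp, by simp⟩, ?_⟩
    exact List.IsChain.imp (fun ⦃x y⦄ ⟨h1, h2, h3⟩ =>
      ⟨h1, List.mem_cons_of_mem _ h2, List.mem_cons_of_mem _ h3⟩) (ih b hb)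

lemma edge_seq : ∀ (ls : List V) (F : Finset G.edgeSet),
    ls.Nodup →
    List.Chain' (fun s s' => ∃ e ∈ F, (e : Sym2 V) = s(s, s')) ls →
    (∀ e ∈ F, ∃ v ∈ ls, v ∈ (e : Sym2 V)) →
    ∃ le : List G.edgeSet, le.Nodup ∧ (∀ e, e ∈ le ↔ e ∈ F) ∧
      le.Chain' (lineGraph G).Adj ∧
      (∀ (h : le ≠ []) (h2 : ls ≠ []), ls.head h2 ∈ (le.head h : Sym2 V)) := by
  classical
  intro ls
  induction ls with
  | nil =>
    intro F _ _ hcov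
    refine ⟨[], by simp, fun e => ?_, List.isChain_nil, by simp⟩
    simp only [List.not_mem_nil, false_iff]
    intro he
    rcases hcov e he with ⟨v, hv, _⟩
    simp at hv
  | cons s rest ih =>
    intro F hnd hch hcov
    rw [List.nodup_cons] at hnd
    cases rest with
    | nil =>
      refine ⟨F.toList, F.nodup_toList, by simp [Finset.mem_toList], ?_, ?_⟩
      · refine chain'_of_common _ F.nodup_toList s (fun e he => ?_)
        rcases hcov e (Finset.mem_toList.mp he) with ⟨v, hv, hve⟩
        simp only [List.mem_singleton] at hv
        rwa [← hv]
      · intro h h2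
        simp only [List.head_cons]
        rcases hcov _ (Finset.mem_toList.mp (List.head_mem h)) with ⟨v, hv, hve⟩
        simp only [List.mem_singleton] at hv
        rwa [← hv]
    | cons s₂ rest' =>
      obtain ⟨⟨ep, hepF, hep⟩, hch'⟩ := List.isChain_cons_cons.mp hch
      -- the set of edges through s and its complement in F
      set Fs : Finset G.edgeSet := F.filter (fun e => s ∈ (e : Sym2 V)) with hFs
      set F' : Finset G.edgeSet := F.filter (fun e => s ∉ (e : Sym2 V)) with hF'
      have hsrest : s ∉ (s₂ :: rest') := hnd.1
      -- apply the induction hypothesis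
      have hchm := chain_mem s₂ rest' hch'
      have hch'' : List.Chain' (fun t t' => ∃ e ∈ F', (e : Sym2 V) = s(t, t')) (s₂ :: rest') := by
        refine List.IsChain.imp (fun ⦃x y⦄ ⟨⟨e, heF, hes⟩, hx, hy⟩ => ⟨e, ?_, hes⟩) hchm
        rw [hF', Finset.mem_filter]
        refine ⟨heF, fun hse => ?_⟩
        rw [hes, Sym2.mem_iff] at hse
        rcases hse with rfl | rfl
        · exact hsrest hx
        · exact hsrest (List.mem_cons_of_mem _ hy)
      have hcov' : ∀ e ∈ F', ∃ v ∈ (s₂ :: rest'), v ∈ (e : Sym2 V) := by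
        intro e he
        rw [hF', Finset.mem_filter] at he
        rcases hcov e he.1 with ⟨v, hv, hve⟩
        rcases List.mem_cons.mp hv with rfl | hv'
        · exact absurd hve he.2
        · exact ⟨v, hv', hve⟩
      obtain ⟨le', hle'nd, hle'mem, hle'ch, hle'hd⟩ := ih F' hnd.2 hch'' hcov'
      have hepFs : ep ∈ Fs := by
        rw [hFs, Finset.mem_filter]
        exact ⟨hepF, by rw [hep]; simp⟩
      have hle'F' : ∀ e ∈ le', s ∉ (e : Sym2 V) := by
        intro e he
        have := (hle'mem e).mp he
        rw [hF', Finset.mem_filter] at this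
        exact this.2
      have hFsS : ∀ e ∈ Fs, s ∈ (e : Sym2 V) := by
        intro e he
        rw [hFs, Finset.mem_filter] at he
        exact he.2
      refine ⟨(Fs.erase ep).toList ++ ep :: le', ?_, ?_, ?_, ?_⟩
      · rw [List.nodup_append]
        refine ⟨Finset.nodup_toList _, ?_, ?_⟩
        · rw [List.nodup_cons]
          refine ⟨fun h => ?_, hle'nd⟩
          exact hle'F' ep h (hFsS ep hepFs)
        · intro x hx y hy hxy
          subst hxy
          rw [Finset.mem_toList, Finset.mem_erase] at hx
          rw [List.mem_cons] at hy
          rcases hy with rfl | hx'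
          · exact hx.1 rfl
          · exact hle'F' x hx' (hFsS x hx.2)
      · intro e
        simp only [List.mem_append, List.mem_cons, Finset.mem_toList, Finset.mem_erase,
          hle'mem e]
        constructor
        · rintro (⟨-, h⟩ | rfl | h)
          · exact (Finset.mem_filter.mp h).1
          · exact hepF
          · exact (Finset.mem_filter.mp h).1
        · intro heF
          by_cases hse : s ∈ (e : Sym2 V)
          · by_cases hee : e = ep
            · exact Or.inr (Or.inl hee)
            · exact Or.inl ⟨hee, Finset.mem_filter.mpr ⟨heF, hse⟩⟩
          · exact Or.inr (Or.inr (Finset.mem_filter.mpr ⟨heF, hse⟩))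
      · rw [List.Chain', List.isChain_append]
        refine ⟨?_, ?_, ?_⟩
        · refine chain'_of_common _ (Finset.nodup_toList _) s (fun e he => ?_)
          exact hFsS e (Finset.mem_erase.mp (Finset.mem_toList.mp he)).2
        · cases le' with
          | nil => simp
          | cons g tl =>
            refine List.isChain_cons_cons.mpr ⟨?_, hle'ch⟩
            have hg : g ∈ g :: tl := List.mem_cons_self
            have hs₂ : s₂ ∈ (g : Sym2 V) := by
              have := hle'hd (by simp) (by simp)
              simpa using this
            refine shares s₂ (by rw [hep]; simp) hs₂ ?_
            intro hfe
            exact hle'F' g hg (hfe ▸ hFsS ep hepFs)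
        · intro x hx y hy
          obtain ⟨hne1, rfl⟩ := List.mem_getLast?_eq_getLast hx
          have hym : y = ep := by simpa using hy.symm
          rw [hym]
          have hxm := List.getLast_mem hne1
          rw [Finset.mem_toList, Finset.mem_erase] at hxm
          exact shares s (hFsS _ hxm.2) (hFsS ep hepFs) hxm.1
      · intro h h2
        simp only [List.head_cons]
        have hh := List.head?_eq_head h
        obtain ⟨b, hb⟩ : ∃ b, ((Fs.erase ep).toList ++ ep :: le').head h = b := ⟨_, rfl⟩
        rw [hb] at hh ⊢
        cases htl : (Fs.erase ep).toList with
        | nil =>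
          rw [htl] at hh
          simp only [List.nil_append, List.head?_cons, Option.some.injEq] at hh
          rw [← hh, hep]
          simp
        | cons x xs =>
          rw [htl] at hh
          simp only [List.cons_append, List.head?_cons, Option.some.injEq] at hh
          have hx : x ∈ (Fs.erase ep).toList := by rw [htl]; simp
          rw [Finset.mem_toList, Finset.mem_erase] at hx
          rw [← hh]
          exact hFsS x hx.2



/-- `1 + i` -/
def pio : GaussianInt := ⟨1, 1⟩

noncomputable def qmk (m : ℕ) : GaussianInt →+* Zi (2 ^ m) :=
  Ideal.Quotient.mk _

lemma qmk_surj (m : ℕ) : Function.Surjective (qmk m) := Ideal.Quotient.mk_surjective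

lemma natCast_pow_eq : ∀ m : ℕ, (((2 ^ m : ℕ) : GaussianInt)) = (2 : GaussianInt) ^ m := by
  intro m; push_cast; ring

lemma qmk_eq_zero {m : ℕ} (z : GaussianInt) : qmk m z = 0 ↔ (2 : GaussianInt) ^ m ∣ z := by
  rw [qmk, Ideal.Quotient.eq_zero_iff_mem, Ideal.mem_span_singleton, natCast_pow_eq]

lemma pio_mul (t : GaussianInt) : pio * t = ⟨t.re - t.im, t.re + t.im⟩ := by
  ext <;> simp [pio, Zsqrtd.re_mul, Zsqrtd.im_mul] <;> ring

lemma pio_dvd_iff (z : GaussianInt) : pio ∣ z ↔ Even (z.re + z.im) := by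
  constructor
  · rintro ⟨t, rfl⟩
    rw [pio_mul]
    exact ⟨t.re, by show t.re - t.im + (t.re + t.im) = _; ring⟩
  · rintro ⟨c, hc⟩
    refine ⟨⟨c, z.im - c⟩, ?_⟩
    rw [pio_mul]
    ext <;> simp <;> omega

lemma pio_dvd_two : pio ∣ (2 : GaussianInt) :=
  ⟨⟨1, -1⟩, by ext <;> simp [pio, Zsqrtd.re_mul, Zsqrtd.im_mul]⟩

lemma pio_sq : pio ^ 2 = (2 : GaussianInt) * ⟨0, 1⟩ := by
  ext <;> simp [pio, pow_two, Zsqrtd.re_mul, Zsqrtd.im_mul]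

lemma pio_pow_2m (m : ℕ) : pio ^ (2 * m) = (2 : GaussianInt) ^ m * ⟨0, 1⟩ ^ m := by
  rw [pow_mul, pio_sq, mul_pow]

lemma I_mul_negI : (⟨0, 1⟩ : GaussianInt) * ⟨0, -1⟩ = 1 := by
  ext <;> simp [Zsqrtd.re_mul, Zsqrtd.im_mul]

lemma two_pow_eq (m : ℕ) : (2 : GaussianInt) ^ m = pio ^ (2 * m) * ⟨0, -1⟩ ^ m := by
  rw [pio_pow_2m, mul_assoc, ← mul_pow, I_mul_negI, one_pow, mul_one]

lemma sq_emod (x : ℤ) : x * x % 2 = x % 2 := by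
  rw [Int.mul_emod]
  have : x % 2 = 0 ∨ x % 2 = 1 := by omega
  rcases this with h | h <;> rw [h] <;> norm_num

lemma norm_odd {z : GaussianInt} (h : ¬ Even (z.re + z.im)) : z.norm % 2 = 1 := by
  have hn : z.norm = z.re * z.re + z.im * z.im := by rw [Zsqrtd.norm_def]; ring
  have h2 : (z.re + z.im) % 2 = 1 := by
    rcases Int.even_or_odd (z.re + z.im) with he | ho
    · exact absurd he h
    · exact Int.odd_iff.mp ho
  rw [hn, Int.add_emod, sq_emod, sq_emod, ← Int.add_emod, h2]

/-- units from odd coordinate sums -/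
lemma isUnit_qmk_of_odd {m : ℕ} (z : GaussianInt) (h : ¬ Even (z.re + z.im)) :
    IsUnit (qmk m z) := by
  have hnorm : z * star z = ((z.norm : ℤ) : GaussianInt) := (Zsqrtd.norm_eq_mul_conj z).symm
  have hodd := norm_odd h
  -- Bezout for the odd integer `z.norm` and `2 ^ m`
  have hcop : IsCoprime (z.norm) (2 : ℤ) := by
    refine ⟨1, -((z.norm - 1) / 2), ?_⟩
    have : 2 * ((z.norm - 1) / 2) = z.norm - 1 := by omega
    linarith [this]
  obtain ⟨a, b, hab⟩ := hcop.pow_right (n := m)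
  -- map everything to the quotient ring
  have hcast : (a : GaussianInt) * ((z.norm : ℤ) : GaussianInt) +
      (b : GaussianInt) * (2 : GaussianInt) ^ m = 1 := by
    have := congrArg (fun t : ℤ => ((t : GaussianInt))) hab
    push_cast at this
    simpa using this
  have h2m : qmk m ((2 : GaussianInt) ^ m) = 0 := (qmk_eq_zero _).mpr dvd_rfl
  have hone : qmk m z * (qmk m (star z) * qmk m ((a : ℤ) : GaussianInt)) = 1 := by
    rw [← map_mul, ← map_mul, ← mul_assoc, hnorm]
    have heq : ((z.norm : ℤ) : GaussianInt) * ((a : ℤ) : GaussianInt) =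
        1 - ((b : ℤ) : GaussianInt) * (2 : GaussianInt) ^ m := by
      rw [← hcast]; ring
    rw [heq, map_sub, map_one, map_mul, h2m, mul_zero, sub_zero]
  exact IsUnit.of_mul_eq_one _ hone

lemma isUnit_of_not_pio_dvd {m : ℕ} {x : Zi (2 ^ m)} (h : ¬ qmk m pio ∣ x) : IsUnit x := by
  obtain ⟨z, rfl⟩ := qmk_surj m x
  by_cases he : Even (z.re + z.im)
  · exact absurd (map_dvd (qmk m) ((pio_dvd_iff z).mpr he)) h
  · exact isUnit_qmk_of_odd z he

lemma pio_dvd_of_qmk_dvd {m : ℕ} (hm : 1 ≤ m) {z : GaussianInt}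
    (h : qmk m pio ∣ qmk m z) : pio ∣ z := by
  obtain ⟨t, ht⟩ := h
  obtain ⟨t₀, rfl⟩ := qmk_surj m t
  have h0 : qmk m (z - pio * t₀) = 0 := by rw [map_sub, map_mul, ← ht]; ring
  rw [qmk_eq_zero] at h0
  obtain ⟨d, hd⟩ := h0
  have hz : z = pio * t₀ + (2 : GaussianInt) ^ m * d := by rw [← hd]; ring
  rw [hz]
  exact dvd_add ⟨t₀, rfl⟩ ((pio_dvd_two.trans (dvd_pow_self 2 (by omega : m ≠ 0))).mul_right d)

lemma extract : ∀ (k : ℕ) (z : GaussianInt), ¬ pio ^ k ∣ z →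
    ∃ a, a < k ∧ ∃ y, ¬ pio ∣ y ∧ z = pio ^ a * y := by
  intro k
  induction k with
  | zero => intro z h; simp at h
  | succ k ih =>
    intro z h
    by_cases h0 : pio ∣ z
    · obtain ⟨t, rfl⟩ := h0
      have ht : ¬ pio ^ k ∣ t := by
        intro hd
        exact h (by rw [pow_succ']; exact mul_dvd_mul_left pio hd)
      obtain ⟨a, hak, y, hy, rfl⟩ := ih t ht
      exact ⟨a + 1, by omega, y, hy, by rw [pow_succ]; ring⟩
    · exact ⟨0, by omega, z, h0, by simp⟩

lemma factor {m : ℕ} (hm : 1 ≤ m) {x : Zi (2 ^ m)} (hx : x ≠ 0) :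
    ∃ a, a ≤ 2 * m - 1 ∧ ∃ u : Zi (2 ^ m), IsUnit u ∧ x = (qmk m pio) ^ a * u := by
  obtain ⟨z, rfl⟩ := qmk_surj m x
  have hz : ¬ pio ^ (2 * m) ∣ z := by
    intro hdvd
    apply hx
    rw [qmk_eq_zero]
    obtain ⟨d, hd⟩ := hdvd
    have hone : ((⟨0, -1⟩ : GaussianInt)) ^ m * (⟨0, 1⟩ : GaussianInt) ^ m = 1 := by
      rw [← mul_pow, show (⟨0, -1⟩ : GaussianInt) * ⟨0, 1⟩ = 1 from by
        rw [mul_comm]; exact I_mul_negI]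
      exact one_pow m
    refine ⟨(⟨0, 1⟩ : GaussianInt) ^ m * d, ?_⟩
    rw [hd, two_pow_eq]
    calc pio ^ (2 * m) * d
        = pio ^ (2 * m) * ((⟨0, -1⟩ : GaussianInt) ^ m * (⟨0, 1⟩ : GaussianInt) ^ m * d) := by
          rw [hone, one_mul]
      _ = pio ^ (2 * m) * (⟨0, -1⟩ : GaussianInt) ^ m * ((⟨0, 1⟩ : GaussianInt) ^ m * d) := by
          ring
  obtain ⟨a, hak, y, hy, rfl⟩ := extract _ z hz
  refine ⟨a, by omega, qmk m y, ?_, by rw [map_mul, map_pow]⟩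
  apply isUnit_of_not_pio_dvd
  intro hd
  exact hy (pio_dvd_of_qmk_dvd hm hd)

lemma norm_pow (z : GaussianInt) (n : ℕ) : (z ^ n).norm = z.norm ^ n := by
  induction n with
  | zero => simp [Zsqrtd.norm_one]
  | succ n ih => rw [pow_succ, Zsqrtd.norm_mul, ih, pow_succ]

lemma norm_pio : pio.norm = 2 := by simp [Zsqrtd.norm_def, pio]

lemma norm_two : (2 : GaussianInt).norm = 4 := by
  have : (2 : GaussianInt) = ((2 : ℤ) : GaussianInt) := by norm_cast
  rw [this, Zsqrtd.norm_intCast]; norm_num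

lemma pio_pow_ne {m : ℕ} (hm : 1 ≤ m) : (qmk m pio) ^ (2 * m - 1) ≠ 0 := by
  rw [← map_pow, Ne, qmk_eq_zero]
  intro hd
  have hnorm : ((2 : GaussianInt) ^ m).norm ∣ (pio ^ (2 * m - 1)).norm := by
    obtain ⟨c, hc⟩ := hd
    exact ⟨c.norm, by rw [hc, Zsqrtd.norm_mul]⟩
  rw [norm_pow, norm_pow, norm_two, norm_pio] at hnorm
  have h4 : (4 : ℤ) ^ m = 2 ^ (2 * m) := by
    rw [show (4:ℤ) = 2^2 by norm_num, ← pow_mul]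
  rw [h4] at hnorm
  have hle : (2:ℤ) ^ (2*m) ≤ 2 ^ (2*m-1) := Int.le_of_dvd (by positivity) hnorm
  have hlt : (2:ℤ) ^ (2*m-1) < 2 ^ (2*m) := by
    apply pow_lt_pow_right₀ (by norm_num)
    omega
  omega

lemma pio_zero_pow {m : ℕ} {a : ℕ} (ha : 2 * m ≤ a) : (qmk m pio) ^ a = 0 := by
  have h2m : (qmk m pio) ^ (2 * m) = 0 := by
    rw [← map_pow, qmk_eq_zero, pio_pow_2m]
    exact ⟨(⟨0, 1⟩ : GaussianInt) ^ m, rfl⟩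
  calc (qmk m pio) ^ a = (qmk m pio) ^ (2 * m) * (qmk m pio) ^ (a - 2 * m) := by
        rw [← pow_add]; congr 1; omega
    _ = 0 := by rw [h2m, zero_mul]

lemma pio_pow_ne' {m : ℕ} (hm : 1 ≤ m) {a : ℕ} (ha : a ≤ 2 * m - 1) :
    (qmk m pio) ^ a ≠ 0 := by
  intro h
  apply pio_pow_ne hm
  have heq : (qmk m pio) ^ (2 * m - 1) = (qmk m pio) ^ a * (qmk m pio) ^ (2 * m - 1 - a) := by
    rw [← pow_add]; congr 1; omega
  rw [heq, h, zero_mul]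

lemma dvd_pow_m_of_mul_eq_zero {m : ℕ} (hm : 1 ≤ m) {x y : Zi (2 ^ m)}
    (h : x * y = 0) (hx : x ≠ 0) (hy : y ≠ 0) :
    (qmk m pio) ^ m ∣ x ∨ (qmk m pio) ^ m ∣ y := by
  obtain ⟨a, ha, u, hu, rfl⟩ := factor hm hx
  obtain ⟨b, hb, v, hv, rfl⟩ := factor hm hy
  have hab : 2 * m ≤ a + b := by
    by_contra hab
    push_neg at hab
    have h1 : (qmk m pio) ^ (a + b) * (u * v) = 0 := by
      rw [← h, pow_add]; ring
    have h0 : (qmk m pio) ^ (a + b) = 0 :=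
      ((hu.mul hv).mul_left_eq_zero).mp h1
    exact pio_pow_ne' hm (by omega) h0
  rcases le_or_gt m a with h' | h'
  · exact Or.inl (Dvd.dvd.mul_right (pow_dvd_pow _ h') u)
  · exact Or.inr (Dvd.dvd.mul_right (pow_dvd_pow _ (by omega : m ≤ b)) v)

lemma finite_Zi (m : ℕ) : Finite (Zi (2 ^ m)) := by
  haveI : NeZero (2 ^ m) := ⟨pow_ne_zero m (by norm_num)⟩
  refine Finite.of_surjective
    (fun p : ZMod (2 ^ m) × ZMod (2 ^ m) => qmk m ⟨(p.1.val : ℤ), (p.2.val : ℤ)⟩) ?_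
  intro x
  obtain ⟨z, rfl⟩ := qmk_surj m x
  refine ⟨((z.re : ZMod (2 ^ m)), (z.im : ZMod (2 ^ m))), ?_⟩
  have key : ∀ a : ℤ, ((2 ^ m : ℕ) : ℤ) ∣ (((a : ZMod (2 ^ m)).val : ℤ) - a) := by
    intro a
    rw [ZMod.val_intCast]
    exact ⟨-(a / ((2 ^ m : ℕ) : ℤ)), by rw [Int.emod_def]; ring⟩
  rw [qmk, Ideal.Quotient.eq, Ideal.mem_span_singleton]
  have hcast : ((2 ^ m : ℕ) : GaussianInt) = (((2 ^ m : ℕ) : ℤ) : GaussianInt) := by push_cast; ring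
  rw [hcast, Zsqrtd.intCast_dvd]
  constructor
  · simpa using key z.re
  · simpa using key z.im

section VertexLemmas
variable {m : ℕ}

lemma mem_zdVertex_iff (hm : 1 ≤ m) (x : Zi (2 ^ m)) :
    x ∈ zdVertex (Zi (2 ^ m)) ↔ x ≠ 0 ∧ qmk m pio ∣ x := by
  constructor
  · rintro ⟨hx0, y, hy0, hxy⟩
    refine ⟨hx0, ?_⟩
    by_contra hd
    exact hy0 (((isUnit_of_not_pio_dvd hd).mul_right_eq_zero).mp hxy)
  · rintro ⟨hx0, t, rfl⟩
    refine ⟨hx0, (qmk m pio) ^ (2 * m - 1), pio_pow_ne hm, ?_⟩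
    have heq : qmk m pio * t * (qmk m pio) ^ (2 * m - 1) =
        (qmk m pio) ^ (2 * m - 1 + 1) * t := by
      rw [pow_succ]; ring
    rw [heq, pio_zero_pow (by omega), zero_mul]

lemma w_mul (hm : 1 ≤ m) {x : Zi (2 ^ m)} (hx : qmk m pio ∣ x) :
    (qmk m pio) ^ (2 * m - 1) * x = 0 := by
  obtain ⟨t, rfl⟩ := hx
  have heq : (qmk m pio) ^ (2 * m - 1) * (qmk m pio * t) =
      (qmk m pio) ^ (2 * m - 1 + 1) * t := by
    rw [pow_succ]; ring
  rw [heq, pio_zero_pow (by omega), zero_mul]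

lemma S_mul {x y : Zi (2 ^ m)} (hx : (qmk m pio) ^ m ∣ x) (hy : (qmk m pio) ^ m ∣ y) :
    x * y = 0 := by
  obtain ⟨s, rfl⟩ := hx
  obtain ⟨t, rfl⟩ := hy
  have heq : (qmk m pio) ^ m * s * ((qmk m pio) ^ m * t) =
      (qmk m pio) ^ (m + m) * (s * t) := by
    rw [pow_add]; ring
  rw [heq, pio_zero_pow (by omega), zero_mul]

/-- the distinguished unit `i` in the quotient -/
noncomputable def iota (m : ℕ) : Zi (2 ^ m) := qmk m ⟨0, 1⟩

lemma isUnit_iota : IsUnit (iota m) := isUnit_qmk_of_odd _ (by norm_num)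

lemma piq_eq : qmk m pio = 1 + iota m := by
  rw [iota, show pio = 1 + (⟨0, 1⟩ : GaussianInt) from by ext <;> simp [pio]]
  rw [RingHom.map_add, map_one]

lemma piq_sq : (qmk m pio) ^ 2 = 2 * iota m := by
  rw [← map_pow, pio_sq, map_mul, iota, map_ofNat]

lemma isUnit_unit2 : IsUnit (2 * iota m - 1) := by
  have : (2 : Zi (2 ^ m)) * iota m - 1 = qmk m ⟨-1, 2⟩ := by
    rw [iota, show (⟨-1, 2⟩ : GaussianInt) = 2 * ⟨0, 1⟩ - 1 from by
      ext <;> simp [Zsqrtd.re_mul, Zsqrtd.im_mul]]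
    rw [map_sub, map_mul, map_one, map_ofNat]
  rw [this]
  exact isUnit_qmk_of_odd _ (by norm_num)

lemma isUnit_unit3 : IsUnit (iota m - 2) := by
  have : iota m - 2 = qmk m ⟨-2, 1⟩ := by
    rw [iota, show (⟨-2, 1⟩ : GaussianInt) = ⟨0, 1⟩ - 2 from by
      ext <;> simp]
    rw [map_sub, map_ofNat]
  rw [this]
  exact isUnit_qmk_of_odd _ (by norm_num)

lemma ne_of_diff (hm : 1 ≤ m) {x y u : Zi (2 ^ m)} {a : ℕ} (ha : a ≤ 2 * m - 1)
    (hu : IsUnit u) (h : x - y = (qmk m pio) ^ a * u) : x ≠ y := by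
  intro he
  rw [he, sub_self] at h
  exact pio_pow_ne' hm ha (hu.mul_left_eq_zero.mp h.symm)

end VertexLemmas

section P
variable {V : Type*} (G : SimpleGraph V) (w : V)

variable (G : SimpleGraph V) (w : V)

/-- abbreviation for star edges -/
noncomputable def mkE (v : V) (h : G.Adj w v) : G.edgeSet := ⟨s(w, v), h⟩

lemma pancyclic_of_star (lv : List V) (le : List G.edgeSet)
    (hlvnd : lv.Nodup) (hwlv : w ∉ lv) (hadj : ∀ v ∈ lv, G.Adj w v) (hlv3 : 3 ≤ lv.length)
    (hlend : le.Nodup) (hlech : le.Chain' (lineGraph G).Adj)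
    (hwle : ∀ e ∈ le, w ∉ (e : Sym2 V))
    (hendle : ∀ e ∈ le, ∀ v ∈ (e : Sym2 V), v ∈ lv)
    (hcomp : ∀ e : G.edgeSet, (∃ v ∈ lv, (e : Sym2 V) = s(w, v)) ∨ e ∈ le) :
    Pancyclic (lineGraph G) := by
  classical
  set f : (v : V) → G.Adj w v → G.edgeSet := mkE G w with hf
  have hfw : ∀ (v : V) (h : G.Adj w v), w ∈ ((f v h : G.edgeSet) : Sym2 V) := by
    intro v h; simp [hf, mkE]
  have hfv : ∀ (v : V) (h : G.Adj w v), v ∈ ((f v h : G.edgeSet) : Sym2 V) := by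
    intro v h; simp [hf, mkE]
  have hfinj : ∀ (a : V) (ha : G.Adj w a) (b : V) (hb : G.Adj w b), f a ha = f b hb → a = b := by
    intro a ha b hb hab
    have : s(w, a) = s(w, b) := congrArg Subtype.val hab
    exact Sym2.congr_right.mp this
  -- the full star list
  set LS : List G.edgeSet := List.pmap f lv hadj with hLS
  have hLSnd : LS.Nodup := hlvnd.pmap hfinj
  have hLSw : ∀ e ∈ LS, w ∈ (e : Sym2 V) := by
    intro e he
    obtain ⟨a, ha, rfl⟩ := List.mem_pmap.mp he
    exact hfw a _
  have hLSlen : LS.length = lv.length := List.length_pmap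
  -- the complete edge list
  set LE : List G.edgeSet := LS ++ le with hLE
  have hLEmem : ∀ e : G.edgeSet, e ∈ LE := by
    intro e
    rcases hcomp e with ⟨v, hv, hev⟩ | hle
    · refine List.mem_append.mpr (Or.inl ?_)
      exact List.mem_pmap.mpr ⟨v, hv, Subtype.ext hev.symm⟩
    · exact List.mem_append.mpr (Or.inr hle)
  have hLEnd : LE.Nodup := by
    rw [hLE, List.nodup_append]
    exact ⟨hLSnd, hlend, fun e he e' he' hee' => hwle e' he' (by rw [← hee']; exact hLSw e he)⟩
  haveI hfin : Fintype G.edgeSet := Fintype.ofList LE hLEmem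
  have hcard : Nat.card G.edgeSet = LE.length := by
    have huniv : LE.toFinset = Finset.univ :=
      Finset.eq_univ_iff_forall.mpr (fun e => List.mem_toFinset.mpr (hLEmem e))
    rw [Nat.card_eq_fintype_card, ← Finset.card_univ, ← huniv,
      List.toFinset_card_of_nodup hLEnd]
  have hLElen : LE.length = lv.length + le.length := by
    rw [hLE, List.length_append, hLSlen]
  constructor
  · rw [hcard, hLElen]; omega
  intro k hk3 hkcard
  rw [hcard, hLElen] at hkcard
  rcases le_or_gt k lv.length with hkle | hkgt
  -- Case A : only star edges
  · set L : List G.edgeSet := List.pmap f (lv.take k) (fun a ha => hadj a (List.take_subset _ _ ha)) with hL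
    have hLnd : L.Nodup := ((List.take_sublist _ _).nodup hlvnd).pmap hfinj
    have hLw : ∀ e ∈ L, w ∈ (e : Sym2 V) := by
      intro e he
      obtain ⟨a, ha, rfl⟩ := List.mem_pmap.mp he
      exact hfw a _
    have hLlen : L.length = k := by
      rw [hL, List.length_pmap, List.length_take]
      omega
    obtain ⟨a, p, hc, hl⟩ := hasCycleLength_of_list L (by omega) hLnd
      (chain'_of_common L hLnd w hLw)
      (fun h => shares w (hLw _ (List.getLast_mem h)) (hLw _ (List.head_mem h))
        (getLast_ne_head L hLnd (by omega) h))
    exact ⟨a, p, hc, by omega⟩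
  -- Case B : a prefix of `le` followed by all star edges
  · set j := k - lv.length with hj
    have hj1 : 1 ≤ j := by omega
    have hjle : j ≤ le.length := by omega
    set P : List G.edgeSet := le.take j with hP
    have hPlen : P.length = j := by rw [hP, List.length_take]; omega
    have hPne : P ≠ [] := by
      intro h; rw [h] at hPlen; simp at hPlen; omega
    have hPsub : ∀ e ∈ P, e ∈ le := fun e he => List.take_subset _ _ he
    set e₁ : G.edgeSet := P.head hPne with he₁
    set ej : G.edgeSet := P.getLast hPne with hej
    have he₁le : e₁ ∈ le := hPsub _ (List.head_mem hPne)
    have hejle : ej ∈ le := hPsub _ (List.getLast_mem hPne)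
    -- choose x ∈ ej, y ∈ e₁ with x ≠ y
    obtain ⟨x, y, hxej, hye₁, hxy⟩ :
        ∃ x y : V, x ∈ (ej : Sym2 V) ∧ y ∈ (e₁ : Sym2 V) ∧ x ≠ y := by
      obtain ⟨⟨a, b⟩, hab⟩ := Quot.exists_rep (e₁ : Sym2 V)
      have hab' : (e₁ : Sym2 V) = s(a, b) := hab.symm
      have hndiag : ¬ (e₁ : Sym2 V).IsDiag := G.not_isDiag_of_mem_edgeSet e₁.prop
      have haneb : a ≠ b := by rw [hab'] at hndiag; simpa using hndiag
      by_cases heq : e₁ = ej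
      · exact ⟨a, b, by rw [← heq, hab']; simp, by rw [hab']; simp, haneb⟩
      · have : ¬ (∀ z ∈ (ej : Sym2 V), z ∈ (e₁ : Sym2 V)) := by
          intro hsub
          exact heq (Subtype.ext (sym2_eq_of_subset
            (G.not_isDiag_of_mem_edgeSet ej.prop) hsub).symm)
        push_neg at this
        obtain ⟨z, hz, hz'⟩ := this
        refine ⟨z, a, hz, by rw [hab']; simp, ?_⟩
        intro hza
        exact hz' (by rw [hab', hza]; simp)
    have hxlv : x ∈ lv := hendle ej hejle x hxej
    have hylv : y ∈ lv := hendle e₁ he₁le y hye₁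
    -- rearranged vertex list
    set A : List V := (lv.erase x).erase y with hA
    set lvxy : List V := x :: (A ++ [y]) with hlvxy
    have hperm : lvxy.Perm lv := by
      have p1 : lv.Perm (x :: lv.erase x) := List.perm_cons_erase hxlv
      have hyex : y ∈ lv.erase x := (List.mem_erase_of_ne (Ne.symm hxy)).mpr hylv
      have p2 : (lv.erase x).Perm (y :: A) := List.perm_cons_erase hyex
      exact ((List.Perm.cons x (List.perm_append_singleton y A)).trans
        (List.Perm.cons x p2.symm)).trans p1.symm
    have hlvxynd : lvxy.Nodup := (List.Perm.nodup_iff hperm).mpr hlvnd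
    have hlvxymem : ∀ v ∈ lvxy, v ∈ lv := fun v hv => hperm.subset hv
    have hlvxylen : lvxy.length = lv.length := hperm.length_eq
    have hadj' : ∀ v ∈ lvxy, G.Adj w v := fun v hv => hadj v (hlvxymem v hv)
    set LS2 : List G.edgeSet := List.pmap f lvxy hadj' with hLS2
    have hLS2nd : LS2.Nodup := hlvxynd.pmap hfinj
    have hLS2w : ∀ e ∈ LS2, w ∈ (e : Sym2 V) := by
      intro e he
      obtain ⟨a, ha, rfl⟩ := List.mem_pmap.mp he
      exact hfw a _
    have hLS2len : LS2.length = lv.length := by rw [hLS2, List.length_pmap, hlvxylen]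
    have hLS2ne : LS2 ≠ [] := by
      intro h
      rw [h] at hLS2len
      simp at hLS2len
      omega
    have hx' : G.Adj w x := hadj x hxlv
    have hy' : G.Adj w y := hadj y hylv
    have hLS2head : LS2.head? = some (f x hx') := by
      show (List.pmap f (x :: (A ++ [y])) hadj').head? = some (f x hx')
      simp [List.pmap]
    have hLS2last : LS2.getLast? = some (f y hy') := by
      show (List.pmap f ((x :: A) ++ [y]) hadj').getLast? = some (f y hy')
      rw [List.pmap_append, List.getLast?_append_of_ne_nil _ (by simp [List.pmap])]
      simp [List.pmap]
    set L : List G.edgeSet := P ++ LS2 with hL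
    have hLlen : L.length = k := by
      rw [hL, List.length_append, hPlen, hLS2len]
      omega
    have hLnd : L.Nodup := by
      rw [hL, List.nodup_append]
      refine ⟨(List.take_sublist _ _).nodup hlend, hLS2nd, ?_⟩
      intro e he e' he' hee'
      subst hee'
      exact hwle e (hPsub e he) (hLS2w e he')
    have hLch : L.Chain' (lineGraph G).Adj := by
      rw [hL, List.Chain', List.isChain_append]
      refine ⟨hlech.take j, chain'_of_common LS2 hLS2nd w hLS2w, ?_⟩
      intro a ha b hb
      rw [List.getLast?_eq_getLast hPne] at ha
      rw [hLS2head] at hb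
      simp only [Option.mem_def, Option.some.injEq] at ha hb
      have ha' : a = ej := by rw [← ha, hej]
      have hb' : b = f x hx' := hb.symm
      subst ha'; subst hb'
      refine shares x hxej (hfv x hx') ?_
      intro h
      exact hwle ej hejle (by rw [h]; exact hfw x hx')
    have hLcl : ∀ h : L ≠ [], (lineGraph G).Adj (L.getLast h) (L.head h) := by
      intro h
      have h1 : L.getLast h = f y hy' := by
        have e1 : L.getLast? = some (L.getLast h) := List.getLast?_eq_getLast h
        have e2 : L.getLast? = some (f y hy') := by
          show (P ++ LS2).getLast? = _
          rw [List.getLast?_append_of_ne_nil _ hLS2ne, hLS2last]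
        rw [e2] at e1
        exact (Option.some.inj e1).symm
      have h2 : L.head h = e₁ := by
        have e1 : L.head? = some (L.head h) := List.head?_eq_head h
        have e2 : L.head? = some e₁ := by
          show (P ++ LS2).head? = _
          rw [List.head?_append_of_ne_nil _ hPne, List.head?_eq_head hPne]
        rw [e2] at e1
        exact (Option.some.inj e1).symm
      rw [h1, h2]
      refine shares y (hfv y hy') hye₁ ?_
      intro hfy
      exact hwle e₁ he₁le (hfy ▸ hfw y hy')
    obtain ⟨a, p, hc, hl⟩ := hasCycleLength_of_list L (by omega) hLnd hLch hLcl
    exact ⟨a, p, hc, by omega⟩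
end P
end Aux

theorem stmt17 (m : ℕ) (hm : 2 ≤ m) :
    Pancyclic (lineGraph (zdGraph (Zi (2 ^ m)))) := by
  classical
  have hm1 : 1 ≤ m := by omega
  obtain ⟨c, hc⟩ : ∃ c, 2 * m = c + 4 := ⟨2 * m - 4, by omega⟩
  haveI : Finite (Zi (2 ^ m)) := Aux.finite_Zi m
  haveI : Fintype ↥(zdVertex (Zi (2 ^ m))) := Fintype.ofFinite _
  set p : Zi (2 ^ m) := Aux.qmk m Aux.pio with hp
  set ι : Zi (2 ^ m) := Aux.iota m with hι
  have hpi : p = 1 + ι := Aux.piq_eq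
  have hp2 : p ^ 2 = 2 * ι := Aux.piq_sq
  have hι2 : ι ^ 2 = -1 := by
    linear_combination hp2 - (p + 1 + ι) * hpi
  -- vertex membership helper
  have hmem : ∀ x : Zi (2 ^ m), x ≠ 0 → p ∣ x → x ∈ zdVertex (Zi (2 ^ m)) := by
    intro x h1 h2
    exact (Aux.mem_zdVertex_iff hm1 x).mpr ⟨h1, h2⟩
  have hvert : ∀ v : ↥(zdVertex (Zi (2 ^ m))), (v : Zi (2 ^ m)) ≠ 0 ∧ p ∣ (v : Zi (2 ^ m)) :=
    fun v => (Aux.mem_zdVertex_iff hm1 _).mp v.prop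
  -- the four distinguished vertices
  have hwel : (p ^ (c + 3)) ∈ zdVertex (Zi (2 ^ m)) := by
    refine hmem _ ?_ (dvd_pow_self _ (by omega))
    rw [show c + 3 = 2 * m - 1 from by omega]
    exact Aux.pio_pow_ne hm1
  have hx1el : (p ^ (c + 2)) ∈ zdVertex (Zi (2 ^ m)) :=
    hmem _ (Aux.pio_pow_ne' hm1 (by omega)) (dvd_pow_self _ (by omega))
  have hx2el : (ι * p ^ (c + 2)) ∈ zdVertex (Zi (2 ^ m)) := by
    refine hmem _ ?_ ((dvd_pow_self p (by omega : c + 2 ≠ 0)).mul_left ι)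
    intro h0
    exact Aux.pio_pow_ne' hm1 (by omega : c + 2 ≤ 2 * m - 1)
      ((Aux.isUnit_iota.mul_right_eq_zero).mp h0)
  have hx3el : (p ^ (c + 1)) ∈ zdVertex (Zi (2 ^ m)) :=
    hmem _ (Aux.pio_pow_ne' hm1 (by omega)) (dvd_pow_self _ (by omega))
  set wv : ↥(zdVertex (Zi (2 ^ m))) := ⟨p ^ (c + 3), hwel⟩ with hwv
  set v1 : ↥(zdVertex (Zi (2 ^ m))) := ⟨p ^ (c + 2), hx1el⟩ with hv1
  set v2 : ↥(zdVertex (Zi (2 ^ m))) := ⟨ι * p ^ (c + 2), hx2el⟩ with hv2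
  set v3 : ↥(zdVertex (Zi (2 ^ m))) := ⟨p ^ (c + 1), hx3el⟩ with hv3
  -- distinctness
  have hc3 : c + 3 = 2 * m - 1 := by omega
  have hne01 : wv ≠ v1 := by
    intro h
    exact Aux.ne_of_diff hm1 (by omega : c + 2 ≤ 2 * m - 1) Aux.isUnit_iota
      (by linear_combination (p ^ (c + 2)) * hpi) (congrArg Subtype.val h)
  have hne02 : wv ≠ v2 := by
    intro h
    exact Aux.ne_of_diff hm1 (by omega : c + 2 ≤ 2 * m - 1) isUnit_one
      (by linear_combination (p ^ (c + 2)) * hpi) (congrArg Subtype.val h)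
  have hne03 : wv ≠ v3 := by
    intro h
    exact Aux.ne_of_diff hm1 (by omega : c + 1 ≤ 2 * m - 1) Aux.isUnit_unit2
      (by linear_combination (p ^ (c + 1)) * hp2) (congrArg Subtype.val h)
  have hne12 : v1 ≠ v2 := by
    intro h
    exact Aux.ne_of_diff hm1 (by omega : c + 3 ≤ 2 * m - 1) Aux.isUnit_iota.neg
      (by linear_combination (ι * p ^ (c + 2)) * hpi + (p ^ (c + 2)) * hι2)
      (congrArg Subtype.val h)
  have hne13 : v1 ≠ v3 := by
    intro h
    exact Aux.ne_of_diff hm1 (by omega : c + 1 ≤ 2 * m - 1) Aux.isUnit_iota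
      (by linear_combination (p ^ (c + 1)) * hpi) (congrArg Subtype.val h)
  have hne23 : v2 ≠ v3 := by
    intro h
    exact Aux.ne_of_diff hm1 (by omega : c + 1 ≤ 2 * m - 1) Aux.isUnit_unit3
      (by linear_combination (ι * p ^ (c + 1)) * hpi + (p ^ (c + 1)) * hι2)
      (congrArg Subtype.val h)
  -- adjacency to the universal vertex
  have hadjw : ∀ v : ↥(zdVertex (Zi (2 ^ m))), v ≠ wv → (zdGraph (Zi (2 ^ m))).Adj wv v := by
    intro v hv
    refine ⟨Ne.symm hv, ?_⟩
    show (p ^ (c + 3)) * (v : Zi (2 ^ m)) = 0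
    rw [hc3]
    exact Aux.w_mul hm1 (hvert v).2
  -- the list of all vertices except wv
  set lv : List ↥(zdVertex (Zi (2 ^ m))) := (Finset.univ.erase wv).toList with hlv
  have hlvnd : lv.Nodup := Finset.nodup_toList _
  have hlvmem : ∀ v, v ∈ lv ↔ v ≠ wv := by
    intro v
    rw [hlv, Finset.mem_toList, Finset.mem_erase]
    simp
  have hwlv : wv ∉ lv := by rw [hlvmem]; simp
  have hlvadj : ∀ v ∈ lv, (zdGraph (Zi (2 ^ m))).Adj wv v := by
    intro v hv
    exact hadjw v ((hlvmem v).mp hv)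
  have hlv3 : 3 ≤ lv.length := by
    have h4 : ({wv, v1, v2, v3} : Finset _).card = 4 := by
      rw [Finset.card_insert_of_notMem (by simp [hne01, hne02, hne03]),
        Finset.card_insert_of_notMem (by simp [hne12, hne13]),
        Finset.card_insert_of_notMem (by simp [hne23]), Finset.card_singleton]
    have hle4 : 4 ≤ Finset.univ.card :=
      h4 ▸ Finset.card_le_card (Finset.subset_univ _)
    rw [hlv, Finset.length_toList, Finset.card_erase_of_mem (Finset.mem_univ _)]
    omega
  -- the clique of high-valuation vertices and the edges avoiding wv
  set S : Finset ↥(zdVertex (Zi (2 ^ m))) :=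
    Finset.univ.filter (fun v => p ^ m ∣ (v : Zi (2 ^ m)) ∧ v ≠ wv) with hS
  set F : Finset (zdGraph (Zi (2 ^ m))).edgeSet :=
    Finset.univ.filter (fun e => wv ∉ (e : Sym2 ↥(zdVertex (Zi (2 ^ m))))) with hF
  have hSmem : ∀ v, v ∈ S.toList ↔ p ^ m ∣ (v : Zi (2 ^ m)) ∧ v ≠ wv := by
    intro v
    rw [Finset.mem_toList, hS, Finset.mem_filter]
    simp
  have hFmem : ∀ e, e ∈ F ↔ wv ∉ (e : Sym2 ↥(zdVertex (Zi (2 ^ m)))) := by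
    intro e
    rw [hF, Finset.mem_filter]
    simp
  -- apply the edge-sequencing lemma
  obtain ⟨le, hlend, hlemem, hlech, -⟩ := Aux.edge_seq S.toList F (Finset.nodup_toList _)
    (by
      refine List.Pairwise.isChain ?_
      refine (Finset.nodup_toList S).imp_of_mem ?_
      intro a b ha hb hab
      rw [hSmem] at ha hb
      have hadj : (zdGraph (Zi (2 ^ m))).Adj a b := ⟨hab, Aux.S_mul ha.1 hb.1⟩
      refine ⟨⟨s(a, b), hadj⟩, ?_, rfl⟩
      rw [hFmem]
      intro hmm
      rw [Sym2.mem_iff] at hmm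
      rcases hmm with rfl | rfl
      · exact ha.2 rfl
      · exact hb.2 rfl)
    (by
      intro e he
      rw [hFmem] at he
      obtain ⟨⟨a, b⟩, hab⟩ := Quot.exists_rep (e : Sym2 ↥(zdVertex (Zi (2 ^ m))))
      have hab' : (e : Sym2 ↥(zdVertex (Zi (2 ^ m)))) = s(a, b) := hab.symm
      have hadj : (zdGraph (Zi (2 ^ m))).Adj a b := by
        have := e.prop
        rw [hab'] at this
        exact this
      have hmul : (a : Zi (2 ^ m)) * b = 0 := hadj.2
      have hanw : a ≠ wv := by
        intro h
        exact he (by rw [hab', ← h]; simp)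
      have hbnw : b ≠ wv := by
        intro h
        exact he (by rw [hab', ← h]; simp)
      rcases Aux.dvd_pow_m_of_mul_eq_zero hm1 hmul (hvert a).1 (hvert b).1 with h | h
      · exact ⟨a, (hSmem a).mpr ⟨h, hanw⟩, by rw [hab']; simp⟩
      · exact ⟨b, (hSmem b).mpr ⟨h, hbnw⟩, by rw [hab']; simp⟩)
  -- apply the master lemma
  refine Aux.pancyclic_of_star (zdGraph (Zi (2 ^ m))) wv lv le hlvnd hwlv hlvadj hlv3
    hlend hlech ?_ ?_ ?_
  · intro e he
    rw [hlemem, hFmem] at he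
    exact he
  · intro e he v hv
    rw [hlemem, hFmem] at he
    rw [hlvmem]
    intro hveq
    rw [hveq] at hv
    exact he hv
  · intro e
    by_cases hwe : wv ∈ (e : Sym2 ↥(zdVertex (Zi (2 ^ m))))
    · left
      obtain ⟨v, hv⟩ := Sym2.mem_iff_exists.mp hwe
      refine ⟨v, ?_, hv⟩
      rw [hlvmem]
      intro hveq
      have hnd : ¬ (e : Sym2 ↥(zdVertex (Zi (2 ^ m)))).IsDiag :=
        (zdGraph (Zi (2 ^ m))).not_isDiag_of_mem_edgeSet e.prop
      rw [hv, hveq] at hnd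
      simp at hnd
    · right
      rw [hlemem, hFmem]
      exact hwe
end
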